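/- Let R = (Σ, I, T) be a regular transition system where the transducer T has n_T states, and let V be a deterministic interpreter over Σ×Γ with n_V states. Then there exists an NFA over the alphabet Σ×Σ whose state type has cardinality at most n_V²·2^(n_T·n_V²) and which recognizes the complement of the potential reachability relation ⇝*_V, i.e., the set of equal-length pairs (u,w) such that there exists W ∈ Inductive(V) with u ⊨_V W and not w ⊨_V W. -/

import Mathlib

/-- A regular transition system: an NFA `I` over `Σ` for the initial
configurations and a transducer (an NFA over `Σ × Σ`) `T` for the transitions. -/
structure RTS (Sig QI QT : Type) where
  I : NFA Sig QI
  T : NFA (Sig × Sig) QT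

/-- `w ⇝ u`: the equal-length pair `(w,u)`, identified with the zipped word over
`Σ × Σ`, is accepted by the transducer. -/
def RTS.Step {Sig QI QT : Type} (R : RTS Sig QI QT) (w u : List Sig) : Prop :=
  w.length = u.length ∧ w.zip u ∈ R.T.accepts

/-- `Reach(R)`: configurations reachable from some initial configuration under the
reflexive-transitive closure of `⇝`. -/
def RTS.Reach {Sig QI QT : Type} (R : RTS Sig QI QT) : Set (List Sig) :=
  { w | ∃ u ∈ R.I.accepts, Relation.ReflTransGen R.Step u w }

/-- `w ⊨_V W`: the equal-length pair `(w, W)`, identified with the zipped word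
over `Σ × Γ`, is accepted by the deterministic interpreter `V`. -/
def Models {Sig Gam QV : Type} (V : DFA (Sig × Gam) QV) (w : List Sig)
    (W : List Gam) : Prop :=
  w.length = W.length ∧ w.zip W ∈ V.accepts

/-- A representation `W ∈ Γ*` is inductive if `u ⇝ w` and `u ⊨_V W` imply
`w ⊨_V W`. -/
def InductiveRep {Sig Gam QI QT QV : Type} (R : RTS Sig QI QT)
    (V : DFA (Sig × Gam) QV) (W : List Gam) : Prop :=
  ∀ u w : List Sig, R.Step u w → Models V u W → Models V w W

/-- `u ⇝*_V w`: every inductive representation satisfied by `u` is satisfied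
by `w`. -/
def PotReachV {Sig Gam QI QT QV : Type} (R : RTS Sig QI QT)
    (V : DFA (Sig × Gam) QV) (u w : List Sig) : Prop :=
  ∀ W : List Gam, InductiveRep R V W → Models V u W → Models V w W

/-- `Ind_V(R) = { w : u ⇝*_V w for some initial configuration u }`. -/
def IndV {Sig Gam QI QT QV : Type} (R : RTS Sig QI QT)
    (V : DFA (Sig × Gam) QV) : Set (List Sig) :=
  { w | ∃ u ∈ R.I.accepts, PotReachV R V u w }


section AuxLemmas

/-- evalFrom distributes over elements of the start set. -/
lemma nfa_mem_evalFrom_iff {α σ : Type*} (M : NFA α σ) (l : List α) :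
    ∀ (S : Set σ) (q : σ), q ∈ M.evalFrom S l ↔ ∃ s ∈ S, q ∈ M.evalFrom {s} l := by
  induction l with
  | nil => intro S q; simp
  | cons a l ih =>
    intro S q
    have h1 : M.evalFrom S (a :: l) = M.evalFrom (M.stepSet S a) l := rfl
    rw [h1, ih]
    constructor
    · rintro ⟨t, ht, hq⟩
      rw [NFA.mem_stepSet] at ht
      obtain ⟨s, hs, hts⟩ := ht
      refine ⟨s, hs, ?_⟩
      have h2 : M.evalFrom {s} (a :: l) = M.evalFrom (M.stepSet {s} a) l := rfl
      rw [h2, ih]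
      exact ⟨t, by simp [NFA.mem_stepSet, hts], hq⟩
    · rintro ⟨s, hs, hq⟩
      have h2 : M.evalFrom {s} (a :: l) = M.evalFrom (M.stepSet {s} a) l := rfl
      rw [h2, ih] at hq
      obtain ⟨t, ht, hq⟩ := hq
      rw [NFA.mem_stepSet] at ht
      obtain ⟨s', hs', hts⟩ := ht
      rw [Set.mem_singleton_iff] at hs'
      exact ⟨t, by rw [NFA.mem_stepSet]; exact ⟨s, hs, hs' ▸ hts⟩, hq⟩

end AuxLemmas

section Constr

variable {Sig Gam QI QT QV : Type}

/-- One step of the "inductivity tracking" set. -/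
def Fstep (T : NFA (Sig × Sig) QT) (V : DFA (Sig × Gam) QV)
    (S : Set (QT × QV × QV)) (γ : Gam) : Set (QT × QV × QV) :=
  { x | ∃ p q r a b, (p, q, r) ∈ S ∧ x.1 ∈ T.step p (a, b) ∧
        x.2.1 = V.step q (a, γ) ∧ x.2.2 = V.step r (b, γ) }

def ClosedSet (T : NFA (Sig × Sig) QT) (V : DFA (Sig × Gam) QV)
    (S : Set (QT × QV × QV)) : Prop :=
  ∀ p q r, (p, q, r) ∈ S → p ∈ T.accept → q ∈ V.accept → r ∈ V.accept

def S0 (T : NFA (Sig × Sig) QT) (V : DFA (Sig × Gam) QV) : Set (QT × QV × QV) :=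
  { x | x.1 ∈ T.start ∧ x.2.1 = V.start ∧ x.2.2 = V.start }

def Dnfa (T : NFA (Sig × Sig) QT) (V : DFA (Sig × Gam) QV) :
    NFA (Sig × Sig) (QV × QV × Set (QT × QV × QV)) where
  step := fun s ab =>
    { t | ∃ γ : Gam, t = (V.step s.1 (ab.1, γ), V.step s.2.1 (ab.2, γ), Fstep T V s.2.2 γ) }
  start := {(V.start, V.start, S0 T V)}
  accept := { s | s.1 ∈ V.accept ∧ s.2.1 ∉ V.accept ∧ ClosedSet T V s.2.2 }

/-- Characterization of the evaluation of `Dnfa`. -/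
lemma mem_eval_Dnfa (T : NFA (Sig × Sig) QT) (V : DFA (Sig × Gam) QV) :
    ∀ (u w : List Sig), u.length = w.length → ∀ (q₁ q₂ : QV) (S : Set (QT × QV × QV)) x,
      x ∈ (Dnfa T V).evalFrom {(q₁, q₂, S)} (u.zip w) ↔
        ∃ W : List Gam, W.length = u.length ∧
          x = (V.evalFrom q₁ (u.zip W), V.evalFrom q₂ (w.zip W),
               List.foldl (Fstep T V) S W) := by
  intro u
  induction u with
  | nil =>
    intro w hw q₁ q₂ S x
    simp only [List.zip_nil_left, NFA.evalFrom_nil, Set.mem_singleton_iff]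
    constructor
    · rintro rfl; exact ⟨[], rfl, by simp⟩
    · rintro ⟨W, hW, rfl⟩
      cases W with
      | nil => simp
      | cons γ W => simp at hW
  | cons a u ih =>
    intro w hw q₁ q₂ S x
    cases w with
    | nil => simp at hw
    | cons b w =>
      simp only [List.length_cons, Nat.add_right_cancel_iff] at hw
      have h1 : (a :: u).zip (b :: w) = (a, b) :: u.zip w := rfl
      rw [h1]
      have h2 : (Dnfa T V).evalFrom {(q₁, q₂, S)} ((a, b) :: u.zip w)
          = (Dnfa T V).evalFrom ((Dnfa T V).stepSet {(q₁, q₂, S)} (a, b)) (u.zip w) := rfl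
      rw [h2, nfa_mem_evalFrom_iff]
      constructor
      · rintro ⟨t, ht, hx⟩
        rw [NFA.mem_stepSet] at ht
        obtain ⟨s, hs, hts⟩ := ht
        rw [Set.mem_singleton_iff] at hs; subst hs
        obtain ⟨γ, rfl⟩ := hts
        rw [ih w hw _ _ _ x] at hx
        obtain ⟨W, hWlen, hxe⟩ := hx
        exact ⟨γ :: W, by simp [hWlen], hxe⟩
      · rintro ⟨W, hWlen, rfl⟩
        cases W with
        | nil => simp at hWlen
        | cons γ W =>
          simp only [List.length_cons, Nat.add_right_cancel_iff] at hWlen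
          refine ⟨(V.step q₁ (a, γ), V.step q₂ (b, γ), Fstep T V S γ), ?_, ?_⟩
          · rw [NFA.mem_stepSet]
            exact ⟨(q₁, q₂, S), rfl, ⟨γ, rfl⟩⟩
          · rw [ih w hw _ _ _ _]
            exact ⟨W, hWlen, rfl⟩

/-- Characterization of the tracking set. -/
lemma mem_foldl_Fstep (T : NFA (Sig × Sig) QT) (V : DFA (Sig × Gam) QV) :
    ∀ (W : List Gam) (S : Set (QT × QV × QV)) (p : QT) (q r : QV),
      (p, q, r) ∈ List.foldl (Fstep T V) S W ↔
        ∃ u w : List Sig, u.length = W.length ∧ w.length = W.length ∧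
          ∃ p₀ q₀ r₀, (p₀, q₀, r₀) ∈ S ∧ p ∈ T.evalFrom {p₀} (u.zip w) ∧
            q = V.evalFrom q₀ (u.zip W) ∧ r = V.evalFrom r₀ (w.zip W) := by
  intro W
  induction W with
  | nil =>
    intro S p q r
    simp only [List.foldl_nil, List.length_eq_zero_iff]
    constructor
    · intro h
      exact ⟨[], [], rfl, rfl, p, q, r, h, by simp, rfl, rfl⟩
    · rintro ⟨u, w, hu, hw, p₀, q₀, r₀, h, hp, rfl, rfl⟩
      cases u with
      | cons a u => simp at hu
      | nil =>
        cases w with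
        | cons b w => simp at hw
        | nil =>
          simp only [List.zip_nil_left, NFA.evalFrom_nil, Set.mem_singleton_iff] at hp
          subst hp
          simpa using h
  | cons γ W ih =>
    intro S p q r
    have h1 : List.foldl (Fstep T V) S (γ :: W) = List.foldl (Fstep T V) (Fstep T V S γ) W := rfl
    rw [h1, ih]
    constructor
    · rintro ⟨u, w, hu, hw, p₁, q₁, r₁, hmem, hp, rfl, rfl⟩
      obtain ⟨p₀, q₀, r₀, a, b, hS, hstep, hq₁, hr₁⟩ := hmem
      refine ⟨a :: u, b :: w, by simp [hu], by simp [hw], p₀, q₀, r₀, hS, ?_, ?_, ?_⟩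
      · have h2 : (a :: u).zip (b :: w) = (a, b) :: u.zip w := rfl
        rw [h2]
        have h3 : T.evalFrom {p₀} ((a, b) :: u.zip w)
            = T.evalFrom (T.stepSet {p₀} (a, b)) (u.zip w) := rfl
        rw [h3, nfa_mem_evalFrom_iff]
        exact ⟨p₁, by rw [NFA.mem_stepSet]; exact ⟨p₀, rfl, hstep⟩, hp⟩
      · rw [show q₁ = V.step q₀ (a, γ) from hq₁]; rfl
      · rw [show r₁ = V.step r₀ (b, γ) from hr₁]; rfl
    · rintro ⟨u, w, hu, hw, p₀, q₀, r₀, hS, hp, rfl, rfl⟩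
      cases u with
      | nil => simp at hu
      | cons a u =>
        cases w with
        | nil => simp at hw
        | cons b w =>
          simp only [List.length_cons, Nat.add_right_cancel_iff] at hu hw
          have h2 : (a :: u).zip (b :: w) = (a, b) :: u.zip w := rfl
          rw [h2] at hp
          have h3 : T.evalFrom {p₀} ((a, b) :: u.zip w)
              = T.evalFrom (T.stepSet {p₀} (a, b)) (u.zip w) := rfl
          rw [h3, nfa_mem_evalFrom_iff] at hp
          obtain ⟨p₁, hp₁mem, hp⟩ := hp
          rw [NFA.mem_stepSet] at hp₁mem
          obtain ⟨p₀', hp₀', hstep⟩ := hp₁mem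
          rw [Set.mem_singleton_iff] at hp₀'
          exact ⟨u, w, hu, hw, p₁, V.step q₀ (a, γ), V.step r₀ (b, γ),
            ⟨p₀, q₀, r₀, a, b, hS, hp₀' ▸ hstep, rfl, rfl⟩, hp, rfl, rfl⟩

end Constr
section Main

variable {Sig Gam QI QT QV : Type}

lemma inductive_iff_closed (R : RTS Sig QI QT) (V : DFA (Sig × Gam) QV) (W : List Gam) :
    InductiveRep R V W ↔ ClosedSet R.T V (List.foldl (Fstep R.T V) (S0 R.T V) W) := by
  constructor
  · intro hInd p q r hmem hpacc hqacc
    rw [mem_foldl_Fstep] at hmem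
    obtain ⟨u, w, hu, hw, p₀, q₀, r₀, hS0, hp, hq, hr⟩ := hmem
    obtain ⟨hp₀, hq₀, hr₀⟩ := hS0
    simp only at hp₀ hq₀ hr₀
    subst hq₀; subst hr₀
    have hstep : R.Step u w := by
      refine ⟨hu.trans hw.symm, ?_⟩
      rw [NFA.mem_accepts]
      exact ⟨p, hpacc, (nfa_mem_evalFrom_iff R.T (u.zip w) R.T.start p).mpr ⟨p₀, hp₀, hp⟩⟩
    have hmod : Models V u W := ⟨hu, by
      rw [DFA.mem_accepts]
      show V.evalFrom V.start (u.zip W) ∈ V.accept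
      exact hq ▸ hqacc⟩
    have h5 := (hInd u w hstep hmod).2
    rw [DFA.mem_accepts] at h5
    have h6 : V.evalFrom V.start (w.zip W) ∈ V.accept := h5
    exact hr ▸ h6
  · intro hCl u w hstep hmod
    obtain ⟨hlen, hT⟩ := hstep
    obtain ⟨hul, hu⟩ := hmod
    refine ⟨hlen ▸ hul, ?_⟩
    rw [NFA.mem_accepts] at hT
    obtain ⟨p, hpacc, hpev⟩ := hT
    rw [nfa_mem_evalFrom_iff] at hpev
    obtain ⟨p₀, hp₀, hp⟩ := hpev
    rw [DFA.mem_accepts]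
    refine hCl p (V.evalFrom V.start (u.zip W)) (V.evalFrom V.start (w.zip W)) ?_ hpacc ?_
    · rw [mem_foldl_Fstep]
      exact ⟨u, w, hul, hlen ▸ hul, p₀, V.start, V.start, ⟨hp₀, rfl, rfl⟩, hp, rfl, rfl⟩
    · rw [DFA.mem_accepts] at hu; exact hu

end Main

/-- Lemma `thm:regular-abstraction`: there is an NFA over `Σ × Σ`
with at most `n_V² · 2^(n_T · n_V²)` states recognizing the complement of the
potential reachability relation `⇝*_V`, i.e. the equal-length pairs `(u,w)` such
that some inductive representation `W` has `u ⊨_V W` but not `w ⊨_V W`. -/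
theorem nfa_for_complement_potReach
    {Sig Gam QI QT QV : Type} [Fintype Sig] [Fintype Gam]
    [Fintype QI] [Fintype QT] [Fintype QV]
    (R : RTS Sig QI QT) (V : DFA (Sig × Gam) QV) :
    ∃ (Q : Type) (_ : Fintype Q) (D : NFA (Sig × Sig) Q),
      Fintype.card Q ≤
        Fintype.card QV ^ 2 * 2 ^ (Fintype.card QT * Fintype.card QV ^ 2) ∧
      ∀ u w : List Sig, u.length = w.length →
        (u.zip w ∈ D.accepts ↔
          ∃ W : List Gam, InductiveRep R V W ∧ Models V u W ∧ ¬ Models V w W) := by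
  refine ⟨QV × QV × Set (QT × QV × QV), inferInstance, Dnfa R.T V, ?_, ?_⟩
  · apply le_of_eq
    simp [Fintype.card_prod, Fintype.card_set]
    ring
  · intro u w hlen
    rw [NFA.mem_accepts]
    constructor
    · rintro ⟨s, hsacc, hsev⟩
      rw [show (Dnfa R.T V).start = {(V.start, V.start, S0 R.T V)} from rfl,
        mem_eval_Dnfa R.T V u w hlen] at hsev
      obtain ⟨W, hWlen, rfl⟩ := hsev
      obtain ⟨h1, h2, h3⟩ := hsacc
      simp only at h1 h2 h3
      refine ⟨W, (inductive_iff_closed R V W).mpr h3, ⟨hWlen.symm, ?_⟩, ?_⟩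
      · rw [DFA.mem_accepts]; exact h1
      · rintro ⟨-, hm⟩
        rw [DFA.mem_accepts] at hm
        exact h2 hm
    · rintro ⟨W, hInd, ⟨hul, hu⟩, hnm⟩
      rw [DFA.mem_accepts] at hu
      have hwl : w.length = W.length := hlen ▸ hul
      have h2 : V.evalFrom V.start (w.zip W) ∉ V.accept := by
        intro hc
        exact hnm ⟨hwl, by rw [DFA.mem_accepts]; exact hc⟩
      refine ⟨(V.evalFrom V.start (u.zip W), V.evalFrom V.start (w.zip W),
        List.foldl (Fstep R.T V) (S0 R.T V) W), ⟨hu, h2, (inductive_iff_closed R V W).mp hInd⟩, ?_⟩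
      rw [show (Dnfa R.T V).start = {(V.start, V.start, S0 R.T V)} from rfl,
        mem_eval_Dnfa R.T V u w hlen]
      exact ⟨W, hul.symm, rfl⟩
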